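/- arXiv:1309.1824 — 4 statements merged into one kernel-verified Lean document; each statement's English description precedes it below -/
import Mathlib

section
/- Suppose that for ψ(y) = Σᵢ₌₁ᴺ vᵢφᵢ(y) the condition '∇ψ(y)ᵀ f(u,y) ≥ 0 for all (u,y) ∈ U×Y' implies v = 0. Then there exists λᴺ ∈ ℝᴺ such that ψᴺ(y) = Σᵢ₌₁ᴺ λᴺᵢ φᵢ(y) attains the supremum in the N-approximating maximin problem, i.e. min_{y∈Y} H(∇ψᴺ(y), y) = μ*_N where μ*_N = sup_{ψ∈D_N} min_{y∈Y} H(∇ψ(y),y). -/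
open MeasureTheory Set

set_option maxHeartbeats 1000000 in
/-- Lemma 1: If `∇ψᵀ f ≥ 0 on U×Y ⟹ ψ = 0` for ψ in the span of
φ₁,…,φ_N, then the N-approximating maximin problem attains its supremum at some
ψᴺ = Σ λᴺᵢ φᵢ. -/
theorem stmt5 {m N : ℕ} {U : Type*} [MetricSpace U] [CompactSpace U] [Nonempty U]
    (Y : Set (EuclideanSpace ℝ (Fin m))) (hY : IsCompact Y) (hYne : Y.Nonempty)
    (f : U → EuclideanSpace ℝ (Fin m) → EuclideanSpace ℝ (Fin m))
    (g : U → EuclideanSpace ℝ (Fin m) → ℝ)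
    (hf : Continuous fun p : U × EuclideanSpace ℝ (Fin m) => f p.1 p.2)
    (hg : Continuous fun p : U × EuclideanSpace ℝ (Fin m) => g p.1 p.2)
    (φ : Fin N → EuclideanSpace ℝ (Fin m) → ℝ) (hφ : ∀ i, ContDiff ℝ 1 (φ i))
    -- the nondegeneracy condition: ∇ψᵀ f ≥ 0 on U×Y with ψ in the span forces v = 0
    (hpos : ∀ v : Fin N → ℝ,
      (∀ u : U, ∀ y ∈ Y, 0 ≤ fderiv ℝ (fun z => ∑ i, v i * φ i z) y (f u y)) → v = 0)
    -- J ψ = min_{y ∈ Y} H(∇ψ(y), y)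
    (J : (EuclideanSpace ℝ (Fin m) → ℝ) → ℝ)
    (hJ : J = fun ψ => sInf ((fun y => ⨅ u : U, (fderiv ℝ ψ y (f u y) + g u y)) '' Y))
    (μN : ℝ)
    (hμN : μN = sSup (J '' {ψ | ∃ c : Fin N → ℝ, ψ = fun z => ∑ i, c i * φ i z})) :
    ∃ lam : Fin N → ℝ, J (fun z => ∑ i, lam i * φ i z) = μN := by
  classical
  have hdiff : ∀ i, Differentiable ℝ (φ i) := fun i => (hφ i).differentiable one_ne_zero
  -- derivative formula
  have hder : ∀ (c : Fin N → ℝ) (y : EuclideanSpace ℝ (Fin m)),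
      fderiv ℝ (fun z => ∑ i, c i * φ i z) y
        = ∑ i, c i • fderiv ℝ (φ i) y := by
    intro c y
    rw [fderiv_fun_sum (fun i _ => ((hdiff i y).const_mul (c i)))]
    exact Finset.sum_congr rfl fun i _ => fderiv_const_mul (hdiff i y) (c i)
  -- key quantities
  set L : (Fin N → ℝ) → U → EuclideanSpace ℝ (Fin m) → ℝ :=
    fun c u y => ∑ i, c i * fderiv ℝ (φ i) y (f u y) with hL
  have hderL : ∀ (c : Fin N → ℝ) (u : U) (y : EuclideanSpace ℝ (Fin m)),
      fderiv ℝ (fun z => ∑ i, c i * φ i z) y (f u y) = L c u y := by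
    intro c u y
    rw [hder]
    simp [hL, ContinuousLinearMap.sum_apply, ContinuousLinearMap.smul_apply, smul_eq_mul]
  set h : (Fin N → ℝ) → EuclideanSpace ℝ (Fin m) → ℝ :=
    fun c y => ⨅ u : U, (L c u y + g u y) with hh
  set F : (Fin N → ℝ) → ℝ := fun c => J (fun z => ∑ i, c i * φ i z) with hF
  have hFval : ∀ c, F c = sInf ((h c) '' Y) := by
    intro c
    show J (fun z => ∑ i, c i * φ i z) = _
    have hfun : (fun y => ⨅ u : U,
        (fderiv ℝ (fun z => ∑ i, c i * φ i z) y (f u y) + g u y)) = h c :=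
      funext fun y => iInf_congr fun u => by rw [hderL]
    rw [hJ]
    show sInf ((fun y => ⨅ u : U,
        (fderiv ℝ (fun z => ∑ i, c i * φ i z) y (f u y) + g u y)) '' Y) = _
    rw [hfun]
  -- joint continuity
  have hKcont : ∀ c : Fin N → ℝ,
      Continuous (fun p : U × EuclideanSpace ℝ (Fin m) => L c p.1 p.2 + g p.1 p.2) := by
    intro c
    refine Continuous.add ?_ hg
    refine continuous_finset_sum _ fun i _ => Continuous.mul continuous_const ?_
    exact (((hφ i).continuous_fderiv one_ne_zero).comp continuous_snd).clm_apply hf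
  -- for fixed y, bddBelow in u
  have hbddu : ∀ (c : Fin N → ℝ) (y : EuclideanSpace ℝ (Fin m)),
      BddBelow (Set.range fun u : U => L c u y + g u y) := by
    intro c y
    have : Continuous fun u : U => L c u y + g u y :=
      (hKcont c).comp (continuous_id.prodMk continuous_const)
    exact (isCompact_range this).bddBelow
  -- lower bound over all of U × Y
  have hlow : ∀ c : Fin N → ℝ, ∃ b : ℝ, ∀ (u : U), ∀ y ∈ Y, b ≤ L c u y + g u y := by
    intro c
    obtain ⟨p₀, hp₀, hmin⟩ :=
      (isCompact_univ.prod hY).exists_isMinOn (univ_nonempty.prod hYne)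
        ((hKcont c).continuousOn)
    exact ⟨L c p₀.1 p₀.2 + g p₀.1 p₀.2, fun u y hy =>
      hmin (Set.mk_mem_prod (mem_univ u) hy)⟩
  have hbddY : ∀ c : Fin N → ℝ, BddBelow ((h c) '' Y) := by
    intro c
    obtain ⟨b, hb⟩ := hlow c
    exact ⟨b, fun z ⟨y, hy, hz⟩ => hz ▸ le_ciInf fun u => hb u y hy⟩
  -- F c ≤ L c u y + g u y for y ∈ Y
  have hFle : ∀ (c : Fin N → ℝ) (u : U), ∀ y ∈ Y, F c ≤ L c u y + g u y := by
    intro c u y hy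
    rw [hFval]
    calc sInf ((h c) '' Y) ≤ h c y := csInf_le (hbddY c) (mem_image_of_mem _ hy)
    _ ≤ L c u y + g u y := ciInf_le (hbddu c y) u
  -- scaling of L
  have hLsmul : ∀ (a : ℝ) (c : Fin N → ℝ) (u : U) (y : EuclideanSpace ℝ (Fin m)),
      L (a • c) u y = a * L c u y := by
    intro a c u y
    simp only [hL, Finset.mul_sum, Pi.smul_apply, smul_eq_mul, mul_assoc]
  -- uniform bound on the gradients
  obtain ⟨M, hM0, hM⟩ : ∃ M : ℝ, 0 ≤ M ∧ ∀ i : Fin N, ∀ (u : U), ∀ y ∈ Y,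
      |fderiv ℝ (φ i) y (f u y)| ≤ M := by
    have key : ∀ i : Fin N, ∃ Mi : ℝ, ∀ (u : U), ∀ y ∈ Y,
        |fderiv ℝ (φ i) y (f u y)| ≤ Mi := by
      intro i
      have hc : Continuous fun p : U × EuclideanSpace ℝ (Fin m) =>
          fderiv ℝ (φ i) p.2 (f p.1 p.2) :=
        (((hφ i).continuous_fderiv one_ne_zero).comp continuous_snd).clm_apply hf
      obtain ⟨C, hC⟩ := (isCompact_univ.prod hY).exists_bound_of_continuousOn
        hc.continuousOn
      exact ⟨C, fun u y hy => hC (u, y) (Set.mk_mem_prod (mem_univ u) hy)⟩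
    choose Mi hMi using key
    obtain ⟨M, hMmax⟩ := Finset.exists_le (Finset.univ.image Mi)
    refine ⟨max M 0, le_max_right _ _, fun i u y hy => le_trans (hMi i u y hy) ?_⟩
    exact le_trans (hMmax (Mi i) (Finset.mem_image_of_mem _ (Finset.mem_univ i)))
      (le_max_left _ _)
  have hLdiff : ∀ (c c' : Fin N → ℝ) (u : U), ∀ y ∈ Y,
      |L c u y - L c' u y| ≤ (N * M) * ‖c - c'‖ := by
    intro c c' u y hy
    have heq : L c u y - L c' u y = ∑ i, (c i - c' i) * fderiv ℝ (φ i) y (f u y) := by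
      simp only [hL, sub_mul, Finset.sum_sub_distrib]
    rw [heq]
    calc |∑ i, (c i - c' i) * fderiv ℝ (φ i) y (f u y)|
        ≤ ∑ i, |(c i - c' i) * fderiv ℝ (φ i) y (f u y)| := Finset.abs_sum_le_sum_abs _ _
      _ ≤ ∑ _i : Fin N, ‖c - c'‖ * M := by
          refine Finset.sum_le_sum fun i _ => ?_
          rw [abs_mul]
          have h1 : |c i - c' i| ≤ ‖c - c'‖ := by
            have := norm_le_pi_norm (c - c') i
            simpa [Real.norm_eq_abs] using this
          exact mul_le_mul h1 (hM i u y hy) (abs_nonneg _) (norm_nonneg _)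
      _ = (N * M) * ‖c - c'‖ := by
          rw [Finset.sum_const, Finset.card_univ, Fintype.card_fin]
          ring
  -- F is Lipschitz
  have hFdiff : ∀ c c' : Fin N → ℝ, F c - F c' ≤ (N * M) * ‖c - c'‖ := by
    intro c c'
    have key : ∀ y ∈ Y, F c - (N * M) * ‖c - c'‖ ≤ h c' y := by
      intro y hy
      refine le_ciInf fun u => ?_
      have h1 : F c ≤ L c u y + g u y := hFle c u y hy
      have h2 := abs_le.mp (hLdiff c c' u y hy)
      have := h2.1
      have := h2.2
      linarith
    have hle : F c - (N * M) * ‖c - c'‖ ≤ sInf ((h c') '' Y) := by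
      refine le_csInf (hYne.image _) ?_
      rintro z ⟨y, hy, rfl⟩
      exact key y hy
    rw [hFval c']
    linarith
  have hFcont : Continuous F := by
    have hlip : LipschitzWith (Real.toNNReal (N * M)) F := by
      refine LipschitzWith.of_dist_le_mul fun c c' => ?_
      rw [Real.dist_eq, dist_eq_norm, Real.coe_toNNReal _ (by positivity)]
      rw [abs_le]
      constructor
      · have := hFdiff c' c
        rw [norm_sub_rev] at this
        linarith
      · exact hFdiff c c'
    exact hlip.continuous
  -- The superlevel set {c | F 0 ≤ F c} is bounded
  have hbound : ∃ R : ℝ, ∀ c : Fin N → ℝ, F 0 ≤ F c → ‖c‖ ≤ R := by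
    by_contra hcon
    push_neg at hcon
    have hseq : ∀ n : ℕ, ∃ c : Fin N → ℝ, F 0 ≤ F c ∧ (n : ℝ) < ‖c‖ := by
      intro n
      obtain ⟨c, hc1, hc2⟩ := hcon n
      exact ⟨c, hc1, hc2⟩
    choose c hc1 hc2 using hseq
    have hcpos : ∀ n : ℕ, (0:ℝ) < ‖c (n+1)‖ :=
      fun n => lt_of_le_of_lt (by exact_mod_cast Nat.zero_le (n+1)) (hc2 (n+1))
    set v : ℕ → Fin N → ℝ := fun n => ‖c (n+1)‖⁻¹ • c (n+1) with hv
    have hvmem : ∀ n, v n ∈ Metric.sphere (0 : Fin N → ℝ) 1 := by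
      intro n
      simp only [Metric.mem_sphere, dist_zero_right, hv, norm_smul, norm_inv,
        norm_norm]
      exact inv_mul_cancel₀ (ne_of_gt (hcpos n))
    obtain ⟨w, hw, σ, hσ, hconv⟩ :=
      (isCompact_sphere (0 : Fin N → ℝ) 1).tendsto_subseq hvmem
    -- for all u, y ∈ Y : 0 ≤ L w u y
    have hwpos : ∀ (u : U), ∀ y ∈ Y, 0 ≤ L w u y := by
      intro u y hy
      have hLc : Continuous fun d : Fin N → ℝ => L d u y := by
        refine continuous_finset_sum _ fun i _ => ?_
        exact (continuous_apply i).mul continuous_const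
      have hlim : Filter.Tendsto (fun k => L (v (σ k)) u y) Filter.atTop
          (nhds (L w u y)) := (hLc.tendsto w).comp hconv
      have htendz : Filter.Tendsto (fun k => ‖c (σ k + 1)‖⁻¹ * (F 0 - g u y))
          Filter.atTop (nhds 0) := by
        have h1 : Filter.Tendsto (fun k => ‖c (σ k + 1)‖) Filter.atTop Filter.atTop := by
          refine Filter.tendsto_atTop_mono (f := fun k : ℕ => (k : ℝ)) ?_
            tendsto_natCast_atTop_atTop
          intro k
          have hk : (k : ℝ) ≤ ((σ k + 1 : ℕ) : ℝ) := by
            exact_mod_cast Nat.le_succ_of_le hσ.le_apply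
          exact le_trans hk (le_of_lt (hc2 (σ k + 1)))
        have := (h1.inv_tendsto_atTop).mul_const (F 0 - g u y)
        simpa using this
      have hineq : ∀ k, ‖c (σ k + 1)‖⁻¹ * (F 0 - g u y) ≤ L (v (σ k)) u y := by
        intro k
        have h1 : F 0 ≤ L (c (σ k + 1)) u y + g u y :=
          le_trans (hc1 (σ k + 1)) (hFle _ u y hy)
        have h2 : L (v (σ k)) u y = ‖c (σ k + 1)‖⁻¹ * L (c (σ k + 1)) u y :=
          hLsmul _ _ u y
        rw [h2]
        have h3 : (0:ℝ) ≤ ‖c (σ k + 1)‖⁻¹ := inv_nonneg.mpr (norm_nonneg _)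
        have h4 : F 0 - g u y ≤ L (c (σ k + 1)) u y := by linarith
        exact mul_le_mul_of_nonneg_left h4 h3
      exact le_of_tendsto_of_tendsto' htendz hlim hineq
    have hw0 : w = 0 := by
      refine hpos w fun u y hy => ?_
      rw [hderL]
      exact hwpos u y hy
    rw [hw0] at hw
    simp at hw
  obtain ⟨R, hR⟩ := hbound
  -- the superlevel set is compact
  set S : Set (Fin N → ℝ) := {c | F 0 ≤ F c} with hS
  have hSclosed : IsClosed S := isClosed_le continuous_const hFcont
  have hSbdd : Bornology.IsBounded S :=
    (Metric.isBounded_closedBall (x := (0 : Fin N → ℝ)) (r := R)).subset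
      fun c hc => by simpa [Metric.mem_closedBall, dist_zero_right] using hR c hc
  have hScompact : IsCompact S :=
    Metric.isCompact_of_isClosed_isBounded hSclosed hSbdd
  have hSne : S.Nonempty := ⟨0, show F 0 ≤ F 0 from le_rfl⟩
  obtain ⟨lam, hlamS, hlammax⟩ :=
    hScompact.exists_isMaxOn hSne hFcont.continuousOn
  refine ⟨lam, ?_⟩
  have himg : J '' {ψ | ∃ c : Fin N → ℝ, ψ = fun z => ∑ i, c i * φ i z}
      = Set.range F := by
    ext x
    constructor
    · rintro ⟨ψ, ⟨cc, rfl⟩, rfl⟩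
      exact ⟨cc, rfl⟩
    · rintro ⟨cc, rfl⟩
      exact ⟨_, ⟨cc, rfl⟩, rfl⟩
  have hgreat : IsGreatest (Set.range F) (F lam) := by
    constructor
    · exact ⟨lam, rfl⟩
    · rintro _ ⟨cc, rfl⟩
      by_cases hcc : F 0 ≤ F cc
      · exact hlammax hcc
      · have h0S : (0 : Fin N → ℝ) ∈ S := show F 0 ≤ F 0 from le_rfl
        exact le_trans (le_of_not_ge hcc) (hlammax h0S)
  have hfin : μN = F lam := by
    rw [hμN, himg, hgreat.csSup_eq]
  rw [hfin]
end

section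
/- Suppose the minimization problem min_{γ∈W} ∫ g dγ over the weak*-compact convex set W ⊂ P(U×Y) has a unique optimal solution γ*, W_N ⊇ W are weak*-compact with ρ_H(W_N, W) → 0, and γᴺ is any optimal solution of min_{γ∈W_N} ∫ g dγ. Then γᴺ → γ* in the weak* topology as N → ∞. -/
open MeasureTheory Set Filter

/-- If the minimization of ∫g over the weak*-compact convex set W has a
unique solution γ*, W_N ⊇ W are weak*-compact with ρ_H(W_N, W) → 0, and γᴺ are
optimal in W_N, then γᴺ → γ* in the weak* topology. -/
theorem stmt10 {X : Type*} [MetricSpace X] [CompactSpace X]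
    [MeasurableSpace X] [BorelSpace X]
    (g : X → ℝ) (hg : Continuous g)
    (ρ : ProbabilityMeasure X → ProbabilityMeasure X → ℝ)
    (hρ_symm : ∀ γ γ', ρ γ γ' = ρ γ' γ)
    (hρ_nonneg : ∀ γ γ', 0 ≤ ρ γ γ')
    (hρ_triangle : ∀ γ γ' γ'', ρ γ γ'' ≤ ρ γ γ' + ρ γ' γ'')
    (hρ_eq : ∀ γ γ', ρ γ γ' = 0 ↔ γ = γ')
    (hρ_metrizes : ∀ (s : ℕ → ProbabilityMeasure X) (γ : ProbabilityMeasure X),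
      Tendsto (fun n => ρ (s n) γ) atTop (nhds 0) ↔ Tendsto s atTop (nhds γ))
    (ρS : ProbabilityMeasure X → Set (ProbabilityMeasure X) → ℝ)
    (hρS : ρS = fun γ Γ => sInf (ρ γ '' Γ))
    (ρH : Set (ProbabilityMeasure X) → Set (ProbabilityMeasure X) → ℝ)
    (hρH : ρH = fun Γ₁ Γ₂ => max (sSup ((fun γ => ρS γ Γ₂) '' Γ₁))
      (sSup ((fun γ => ρS γ Γ₁) '' Γ₂)))
    (WN : ℕ → Set (ProbabilityMeasure X)) (W : Set (ProbabilityMeasure X))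
    (hWNc : ∀ N, IsCompact (WN N)) (hWc : IsCompact W) (hWne : W.Nonempty)
    (hWconvex : ∀ γ₁ ∈ W, ∀ γ₂ ∈ W, ∀ a : NNReal, a ≤ 1 →
      ∀ γ₃ : ProbabilityMeasure X,
        γ₃.toMeasure = a • γ₁.toMeasure + (1 - a) • γ₂.toMeasure → γ₃ ∈ W)
    (hsup : ∀ N, W ⊆ WN N)
    (hconv : Tendsto (fun N => ρH (WN N) W) atTop (nhds 0))
    -- γ* is the unique optimal solution over W
    (γstar : ProbabilityMeasure X) (hγstarW : γstar ∈ W)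
    (hopt : ∀ γ ∈ W, ∫ x, g x ∂γstar.toMeasure ≤ ∫ x, g x ∂γ.toMeasure)
    (huniq : ∀ γ ∈ W, (∫ x, g x ∂γ.toMeasure = ∫ x, g x ∂γstar.toMeasure) → γ = γstar)
    -- γᴺ are optimal solutions over W_N
    (γN : ℕ → ProbabilityMeasure X) (hγN : ∀ N, γN N ∈ WN N)
    (hγNopt : ∀ N, ∀ γ ∈ WN N, ∫ x, g x ∂(γN N).toMeasure ≤ ∫ x, g x ∂γ.toMeasure) :
    Tendsto γN atTop (nhds γstar) := by
  classical
  -- ρ is continuous in its first argument (second fixed)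
  have hcontA : ∀ a, Continuous (fun γ => ρ γ a) := by
    intro a
    apply SeqContinuous.continuous
    intro s γ hs
    have h0 : Tendsto (fun n => ρ (s n) γ) atTop (nhds 0) := (hρ_metrizes s γ).mpr hs
    have hlow : ∀ n, ρ γ a - ρ (s n) γ ≤ ρ (s n) a := by
      intro n
      have := hρ_triangle γ (s n) a
      rw [hρ_symm γ (s n)] at this
      linarith
    have hup : ∀ n, ρ (s n) a ≤ ρ (s n) γ + ρ γ a := fun n => hρ_triangle (s n) γ a
    have l1 : Tendsto (fun n => ρ γ a - ρ (s n) γ) atTop (nhds (ρ γ a)) := by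
      simpa using (tendsto_const_nhds (x := ρ γ a)).sub h0
    have l2 : Tendsto (fun n => ρ (s n) γ + ρ γ a) atTop (nhds (ρ γ a)) := by
      simpa using h0.add (tendsto_const_nhds (x := ρ γ a))
    exact tendsto_of_tendsto_of_tendsto_of_le_of_le l1 l2 hlow hup
  obtain ⟨w0, hw0⟩ := id hWne
  -- basic ρS facts
  have hρS_nonneg : ∀ γ, 0 ≤ ρS γ W := by
    intro γ; rw [hρS]
    exact Real.sInf_nonneg (by rintro x ⟨y, _, rfl⟩; exact hρ_nonneg _ _)
  have hρS_le : ∀ γ, ∀ w ∈ W, ρS γ W ≤ ρ γ w := by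
    intro γ w hw; rw [hρS]
    exact csInf_le ⟨0, by rintro x ⟨y, _, rfl⟩; exact hρ_nonneg _ _⟩ ⟨w, hw, rfl⟩
  -- ρS (γN N) W ≤ ρH (WN N) W
  have hle : ∀ N, ρS (γN N) W ≤ ρH (WN N) W := by
    intro N
    obtain ⟨m, hm, hmax⟩ := (hWNc N).exists_isMaxOn ⟨γN N, hγN N⟩ (hcontA w0).continuousOn
    have hbdd : BddAbove ((fun γ => ρS γ W) '' WN N) := by
      refine ⟨ρ m w0, ?_⟩
      rintro x ⟨y, hy, rfl⟩
      exact le_trans (hρS_le y w0 hw0) (hmax hy)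
    have h1 : ρS (γN N) W ≤ sSup ((fun γ => ρS γ W) '' WN N) :=
      le_csSup hbdd ⟨γN N, hγN N, rfl⟩
    rw [hρH]
    exact le_trans h1 (le_max_left _ _)
  have hρStend : Tendsto (fun N => ρS (γN N) W) atTop (nhds 0) :=
    tendsto_of_tendsto_of_tendsto_of_le_of_le tendsto_const_nhds hconv
      (fun N => hρS_nonneg _) hle
  -- nearest points in W
  have hnear : ∀ N, ∃ w ∈ W, ρ (γN N) w ≤ ρS (γN N) W := by
    intro N
    have hc : Continuous (fun γ => ρ (γN N) γ) := by
      simp only [fun γ => hρ_symm (γN N) γ]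
      exact hcontA (γN N)
    obtain ⟨w, hwW, hmin⟩ := hWc.exists_isMinOn hWne hc.continuousOn
    refine ⟨w, hwW, ?_⟩
    rw [hρS]
    refine le_csInf ⟨ρ (γN N) w0, w0, hw0, rfl⟩ ?_
    rintro b ⟨y, hy, rfl⟩
    exact hmin hy
  choose w hwW hwmin using hnear
  have hwtend : Tendsto (fun N => ρ (γN N) (w N)) atTop (nhds 0) :=
    tendsto_of_tendsto_of_tendsto_of_le_of_le tendsto_const_nhds hρStend
      (fun N => hρ_nonneg _ _) hwmin
  -- integral functional
  set G : ProbabilityMeasure X → ℝ := fun μ => ∫ x, g x ∂μ.toMeasure with hG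
  have hGcont : Continuous G := by
    have := ProbabilityMeasure.continuous_integral_boundedContinuousFunction
      (X := X) (BoundedContinuousFunction.mkOfCompact ⟨g, hg⟩)
    simpa [hG] using this
  -- subsequence argument
  apply tendsto_of_subseq_tendsto
  intro ns hns
  obtain ⟨winf, hwinfW, φ, hφ, hφtend⟩ := hWc.tendsto_subseq (x := fun k => w (ns k)) (fun k => hwW _)
  refine ⟨φ, ?_⟩
  have hnsφ : Tendsto (fun k => ns (φ k)) atTop atTop := hns.comp hφ.tendsto_atTop
  -- γN (ns (φ k)) → winf
  have hwφ : Tendsto (fun k => ρ (w (ns (φ k))) winf) atTop (nhds 0) :=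
    (hρ_metrizes _ _).mpr hφtend
  have hγρ : Tendsto (fun k => ρ (γN (ns (φ k))) (w (ns (φ k)))) atTop (nhds 0) :=
    hwtend.comp hnsφ
  have hkey : Tendsto (fun k => ρ (γN (ns (φ k))) winf) atTop (nhds 0) := by
    have hup : ∀ k, ρ (γN (ns (φ k))) winf ≤
        ρ (γN (ns (φ k))) (w (ns (φ k))) + ρ (w (ns (φ k))) winf :=
      fun k => hρ_triangle _ _ _
    have l2 : Tendsto (fun k => ρ (γN (ns (φ k))) (w (ns (φ k))) + ρ (w (ns (φ k))) winf)
        atTop (nhds 0) := by simpa using hγρ.add hwφ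
    exact tendsto_of_tendsto_of_tendsto_of_le_of_le tendsto_const_nhds l2
      (fun k => hρ_nonneg _ _) hup
  have hγtend : Tendsto (fun k => γN (ns (φ k))) atTop (nhds winf) :=
    (hρ_metrizes _ _).mp hkey
  -- winf = γstar
  have hGle : G winf ≤ G γstar := by
    refine le_of_tendsto (hGcont.continuousAt.tendsto.comp hγtend) ?_
    filter_upwards with k
    exact hγNopt (ns (φ k)) γstar (hsup _ hγstarW)
  have : winf = γstar := huniq winf hwinfW (le_antisymm hGle (hopt winf hwinfW))
  rw [this] at hγtend
  exact hγtend
end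

section
/- Let γ* be a probability measure on a compact metric space X, and Θ* a set whose closure satisfies: for every x̄ ∈ cl Θ* and every r > 0, γ*(B_r(x̄)) > 0 (B_r denotes the open r-ball intersected with X). Let γᴺ → γ* weakly, where each γᴺ is supported on a finite set Θ_N ⊂ X. Then sup_{x∈Θ*} d(x, Θ_N) → 0 as N → ∞. -/
open MeasureTheory Set Filter

/-- If γ* charges every ball centered at points of cl Θ*, γᴺ → γ*
weakly, and each γᴺ is supported on a finite set Θ_N, then
sup_{x∈Θ*} d(x, Θ_N) → 0. -/
theorem stmt12 {X : Type*} [MetricSpace X] [CompactSpace X]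
    [MeasurableSpace X] [BorelSpace X]
    (γstar : ProbabilityMeasure X) (Θstar : Set X)
    (hcharge : ∀ x ∈ closure Θstar, ∀ r > (0:ℝ), 0 < γstar.toMeasure (Metric.ball x r))
    (γN : ℕ → ProbabilityMeasure X) (ΘN : ℕ → Finset X)
    (hsupp : ∀ n, (γN n).toMeasure ((↑(ΘN n) : Set X)ᶜ) = 0)
    (hweak : Tendsto γN atTop (nhds γstar)) :
    Tendsto (fun n => sSup ((fun x => Metric.infDist x (↑(ΘN n) : Set X)) '' Θstar))
      atTop (nhds 0) := by
  rcases Θstar.eq_empty_or_nonempty with hΘ | hΘ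
  · simp [hΘ, Real.sSup_empty, tendsto_const_nhds]
  by_contra hcon
  rw [Metric.tendsto_atTop] at hcon
  push_neg at hcon
  obtain ⟨ε, hε, hfreq⟩ := hcon
  have hfreq' : ∃ᶠ n in atTop, ∃ x ∈ Θstar, ε / 2 < Metric.infDist x (↑(ΘN n) : Set X) := by
    rw [Filter.frequently_atTop]
    intro N
    obtain ⟨n, hnN, hn⟩ := hfreq N
    refine ⟨n, hnN, ?_⟩
    by_contra hall
    push_neg at hall
    have hle : sSup ((fun x => Metric.infDist x (↑(ΘN n) : Set X)) '' Θstar) ≤ ε / 2 := by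
      apply Real.sSup_le
      · rintro y ⟨x, hx, rfl⟩
        exact hall x hx
      · linarith
    have hnonneg : 0 ≤ sSup ((fun x => Metric.infDist x (↑(ΘN n) : Set X)) '' Θstar) := by
      apply Real.sSup_nonneg
      rintro y ⟨x, hx, rfl⟩
      exact Metric.infDist_nonneg
    rw [Real.dist_eq, sub_zero, abs_of_nonneg hnonneg] at hn
    linarith
  obtain ⟨φ, hφ, hφprop⟩ := Filter.extraction_of_frequently_atTop hfreq'
  choose x hxmem hxdist using hφprop
  have hxcl : ∀ k, x k ∈ closure Θstar := fun k => subset_closure (hxmem k)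
  obtain ⟨xb, hxbmem, ψ, hψ, hψtend⟩ :=
    (isClosed_closure.isCompact (s := closure Θstar)).tendsto_subseq hxcl
  have hpos := hcharge xb hxbmem (ε / 4) (by linarith)
  have hweak2 : Tendsto (fun k => γN (φ (ψ k))) atTop (nhds γstar) :=
    hweak.comp ((hφ.comp hψ).tendsto_atTop)
  have key := ProbabilityMeasure.le_liminf_measure_open_of_tendsto hweak2
    (Metric.isOpen_ball (x := xb) (ε := ε / 4))
  have hev : ∀ᶠ k in atTop,
      (γN (φ (ψ k)) : Measure X) (Metric.ball xb (ε / 4)) = 0 := by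
    have hclose : ∀ᶠ k in atTop, dist (x (ψ k)) xb < ε / 4 := by
      have := Metric.tendsto_nhds.mp hψtend (ε / 4) (by linarith)
      exact this
    filter_upwards [hclose] with k hk
    have hsub : Metric.ball xb (ε / 4) ⊆ (↑(ΘN (φ (ψ k))) : Set X)ᶜ := by
      intro y hy
      intro hymem
      have h1 : dist (x (ψ k)) y < ε / 2 := by
        have := Metric.mem_ball.mp hy
        calc dist (x (ψ k)) y ≤ dist (x (ψ k)) xb + dist xb y := dist_triangle _ _ _
        _ < ε / 4 + ε / 4 := by rw [dist_comm xb y]; linarith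
        _ = ε / 2 := by ring
      have h2 : Metric.infDist (x (ψ k)) (↑(ΘN (φ (ψ k))) : Set X) ≤ dist (x (ψ k)) y :=
        Metric.infDist_le_dist_of_mem hymem
      have h3 := hxdist (ψ k)
      linarith
    exact measure_mono_null hsub (hsupp (φ (ψ k)))
  have hliminf : (atTop.liminf fun k => (γN (φ (ψ k)) : Measure X) (Metric.ball xb (ε / 4))) = 0 := by
    rw [Filter.liminf_congr hev]
    simp
  rw [hliminf] at key
  exact absurd (le_antisymm key zero_le) (ne_of_gt hpos)
end

section
/- In the setting of the previous statement, if additionally a(𝔛) = λ₀(𝔛), then the discrete measure γ = Σⱼ₌₁^{N+1} γⱼ(𝔛) δ_{xⱼ} is an optimal solution of the semi-infinite LP problem (its value ∫g dγ equals G*_N), and min_{x∈X}(g(x) + Σᵢ hᵢ(x)λᵢ(𝔛)) = G*_N, i.e. λ(𝔛) solves the dual problem. -/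
open MeasureTheory Set

/-- Corollary of Lemma 8.1: If additionally a(𝔛) = λ₀(𝔛), then the
discrete measure Σⱼ γⱼ(𝔛) δ_{xⱼ} is an optimal solution of the SILP (its value
Σⱼ g(xⱼ)γⱼ(𝔛) equals G*_N) and λ(𝔛) solves the dual problem:
min_x(g(x) + Σᵢ hᵢ(x)λᵢ(𝔛)) = G*_N. -/
theorem stmt18 {N : ℕ} {X : Type*} [MetricSpace X] [CompactSpace X] [Nonempty X]
    [MeasurableSpace X] [BorelSpace X]
    (g : X → ℝ) (h : Fin N → X → ℝ)
    (hg : Continuous g) (hh : ∀ i, Continuous (h i))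
    (GN : ℝ)
    (hGN : GN = sInf {c | ∃ μ : ProbabilityMeasure X,
      (∀ i, ∫ x, h i x ∂μ.toMeasure = 0) ∧ c = ∫ x, g x ∂μ.toMeasure})
    (hfeas : ∃ μ : ProbabilityMeasure X, ∀ i, ∫ x, h i x ∂μ.toMeasure = 0)
    (hstrong : ∃ lamBar : Fin N → ℝ,
      GN = sInf (Set.range fun x' => g x' + ∑ i, h i x' * lamBar i))
    (x : Fin (N + 1) → X)
    (γ : Fin (N + 1) → ℝ) (hγnn : ∀ j, 0 ≤ γ j)
    (hγ1 : ∑ j, γ j = 1)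
    (hγ0 : ∀ i : Fin N, ∑ j, h i (x j) * γ j = 0)
    (lam0 : ℝ) (lam : Fin N → ℝ)
    (hdual : ∀ j : Fin (N + 1), lam0 - ∑ i, h i (x j) * lam i = g (x j))
    -- the additional assumption a(𝔛) = λ₀(𝔛)
    (heq : sInf (Set.range fun x' => g x' + ∑ i, h i x' * lam i) = lam0) :
    (∑ j, γ j * g (x j) = GN) ∧
    (∫ x', g x' ∂(∑ j, ENNReal.ofReal (γ j) • Measure.dirac (x j)) = GN) ∧
    sInf (Set.range fun x' => g x' + ∑ i, h i x' * lam i) = GN := by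
  -- the Lagrangian function
  set f : X → ℝ := fun x' => g x' + ∑ i, h i x' * lam i with hf
  have hfcont : Continuous f := by
    apply hg.add
    exact continuous_finset_sum _ fun i _ => (hh i).mul continuous_const
  -- pointwise bound: f x' ≥ lam0
  have hflb : ∀ x' : X, lam0 ≤ f x' := by
    intro x'
    rw [← heq]
    exact csInf_le (isCompact_range hfcont).bddBelow ⟨x', rfl⟩
  -- the value of the discrete measure
  have hsum : ∑ j, γ j * g (x j) = lam0 := by
    have : ∀ j, γ j * g (x j) = γ j * lam0 - ∑ i, h i (x j) * lam i * γ j := by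
      intro j
      rw [← hdual j, mul_sub]
      congr 1
      rw [Finset.mul_sum]
      exact Finset.sum_congr rfl fun i _ => by ring
    rw [Finset.sum_congr rfl fun j _ => this j, Finset.sum_sub_distrib,
      ← Finset.sum_mul, hγ1, one_mul, Finset.sum_comm]
    have : ∀ i : Fin N, ∑ j, h i (x j) * lam i * γ j = 0 := by
      intro i
      have : ∑ j, h i (x j) * lam i * γ j = (∑ j, h i (x j) * γ j) * lam i := by
        rw [Finset.sum_mul]; congr 1; ext j; ring
      rw [this, hγ0 i, zero_mul]
    rw [Finset.sum_congr rfl fun i _ => this i, Finset.sum_const_zero, sub_zero]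
  -- integrability of continuous functions wrt finite measures
  have hint : ∀ (μ : Measure X) [IsFiniteMeasure μ] (φ : X → ℝ), Continuous φ →
      Integrable φ μ := by
    intro μ _ φ hφ
    rw [← integrableOn_univ]
    exact hφ.continuousOn.integrableOn_compact isCompact_univ
  -- every feasible value is ≥ lam0
  have hlow : ∀ μ : ProbabilityMeasure X, (∀ i, ∫ x', h i x' ∂μ.toMeasure = 0) →
      lam0 ≤ ∫ x', g x' ∂μ.toMeasure := by
    intro μ hμ
    have h1 : ∫ x', f x' ∂μ.toMeasure = ∫ x', g x' ∂μ.toMeasure := by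
      rw [hf]
      rw [integral_add (hint _ _ hg) (hint _ _ (continuous_finset_sum _ fun i _ =>
        (hh i).mul continuous_const : Continuous fun x' => ∑ i, h i x' * lam i))]
      rw [integral_finset_sum _ (fun i _ => ((hint _ _ (hh i) : Integrable _ _).mul_const _))]
      simp only [integral_mul_const]
      simp [hμ]
    calc lam0 = ∫ _x', lam0 ∂μ.toMeasure := by simp
      _ ≤ ∫ x', f x' ∂μ.toMeasure :=
          integral_mono (integrable_const _) (hint _ _ hfcont) hflb
      _ = _ := h1
  -- the discrete measure
  set ν : Measure X := ∑ j, ENNReal.ofReal (γ j) • Measure.dirac (x j) with hν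
  have hνprob : IsProbabilityMeasure ν := by
    constructor
    rw [hν]
    simp only [Measure.finset_sum_apply, Measure.smul_apply, Measure.dirac_apply_of_mem
      (mem_univ _), smul_eq_mul, mul_one]
    rw [← ENNReal.ofReal_sum_of_nonneg (fun j _ => hγnn j), hγ1, ENNReal.ofReal_one]
  have hνint : ∀ φ : X → ℝ, Continuous φ → ∫ x', φ x' ∂ν = ∑ j, γ j * φ (x j) := by
    intro φ hφ
    rw [hν, integral_finset_sum_measure]
    · congr 1; ext j
      rw [integral_smul_measure, integral_dirac, ENNReal.toReal_ofReal (hγnn j), smul_eq_mul]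
    · intro j _
      exact (hint _ φ hφ).smul_measure (by simp)
  have hνh : ∀ i, ∫ x', h i x' ∂ν = 0 := by
    intro i
    rw [hνint _ (hh i)]
    rw [← hγ0 i]
    congr 1; ext j; ring
  have hνg : ∫ x', g x' ∂ν = lam0 := by rw [hνint _ hg, hsum]
  -- GN = lam0
  have hGNlam0 : GN = lam0 := by
    rw [hGN]
    apply le_antisymm
    · apply csInf_le
      · exact ⟨lam0, fun c hc => by obtain ⟨μ, hμ, rfl⟩ := hc; exact hlow μ hμ⟩
      · exact ⟨⟨ν, hνprob⟩, hνh, hνg.symm⟩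
    · apply le_csInf
      · obtain ⟨μ, hμ⟩ := hfeas
        exact ⟨_, μ, hμ, rfl⟩
      · rintro c ⟨μ, hμ, rfl⟩
        exact hlow μ hμ
  exact ⟨by rw [hsum, hGNlam0], by rw [hνg, hGNlam0], by rw [heq, hGNlam0]⟩
end
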